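/- Let Ω be a finite probability space, C a finite color set, H : Ω → C, ≈ an equivalence relation on Ω whose classes determine the conditional color densities d(c | e) := P[H(e')=c | e' ≈ e], and δ : Ω → [0,∞) with E[δ] ≤ ε/|C|. Define an element e to be ordinary if d(H(e) | e) ≥ ε^{1/3}/|C| and δ(e) ≤ ε^{2/3}/|C|. Then P[e is not ordinary] ≤ 2ε^{1/3}. -/

import Mathlib

open scoped Classical

section Aux
open Finset

theorem aux_markov {Ω : Type*} [Fintype Ω] (w δ : Ω → ℝ) (hw : ∀ x, 0 ≤ w x)
    (hδ : ∀ x, 0 ≤ δ x) (t B : ℝ) (ht : 0 < t)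
    (hE : ∑ x, w x * δ x ≤ t * B) :
    ∑ e ∈ univ.filter (fun e => ¬ δ e ≤ t), w e ≤ B := by
  classical
  have h1 : t * ∑ e ∈ univ.filter (fun e => ¬ δ e ≤ t), w e
      ≤ ∑ e ∈ univ.filter (fun e => ¬ δ e ≤ t), w e * δ e := by
    rw [Finset.mul_sum]
    refine Finset.sum_le_sum fun e he => ?_
    rw [Finset.mem_filter] at he
    have h := le_of_lt (lt_of_not_ge he.2)
    calc t * w e = w e * t := mul_comm _ _
      _ ≤ w e * δ e := mul_le_mul_of_nonneg_left h (hw e)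
  have h2 : ∑ e ∈ univ.filter (fun e => ¬ δ e ≤ t), w e * δ e ≤ ∑ x, w x * δ x :=
    Finset.sum_le_sum_of_subset_of_nonneg (Finset.filter_subset _ _)
      (fun x _ _ => mul_nonneg (hw x) (hδ x))
  exact le_of_mul_le_mul_left (h1.trans (h2.trans hE)) ht

theorem aux_density {Ω C : Type*} [Fintype Ω] [Fintype C]
    (w : Ω → ℝ) (hw : ∀ x, 0 ≤ w x) (hw1 : ∑ x, w x = 1)
    (H : Ω → C) (R : Ω → Ω → Prop) (hR : Equivalence R)
    (N D : Ω → ℝ)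
    (hN : ∀ e, N e = ∑ e' ∈ univ.filter (fun e' => H e' = H e ∧ R e' e), w e')
    (hD : ∀ e, D e = ∑ e' ∈ univ.filter (fun e' => R e' e), w e')
    (α : ℝ) (hα : 0 < α) :
    ∑ e ∈ univ.filter (fun e : Ω => ¬ α ≤ N e / D e), w e ≤ α * Fintype.card C := by
  classical
  have hN0 : ∀ e, 0 ≤ N e := fun e => by
    rw [hN]; exact Finset.sum_nonneg fun i _ => hw i
  have hD0 : ∀ e, 0 ≤ D e := fun e => by
    rw [hD]; exact Finset.sum_nonneg fun i _ => hw i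
  have hwN : ∀ e, w e ≤ N e := fun e => by
    rw [hN]
    exact Finset.single_le_sum (fun i _ => hw i)
      (by simp [hR.refl e])
  have hND : ∀ e, N e ≤ D e := fun e => by
    rw [hN, hD]
    refine Finset.sum_le_sum_of_subset_of_nonneg ?_ (fun i _ _ => hw i)
    intro x hx
    simp only [Finset.mem_filter] at *
    exact ⟨hx.1, hx.2.2⟩
  set f : Ω → ℝ := fun e => if 0 < w e then w e / N e * (α * D e) else 0 with hf
  -- pointwise bound on the bad set
  have hpt : ∀ e ∈ univ.filter (fun e : Ω => ¬ α ≤ N e / D e), w e ≤ f e := by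
    intro e he
    rw [Finset.mem_filter] at he
    by_cases hwe : 0 < w e
    · have hNe : 0 < N e := lt_of_lt_of_le hwe (hwN e)
      have hDe : 0 < D e := lt_of_lt_of_le hNe (hND e)
      have hlt : N e < α * D e := by
        have := lt_of_not_ge he.2
        rwa [div_lt_iff₀ hDe] at this
      have : w e = w e / N e * N e := by field_simp
      rw [hf]; simp only [if_pos hwe]
      calc w e = w e / N e * N e := this
        _ ≤ w e / N e * (α * D e) :=
          mul_le_mul_of_nonneg_left (le_of_lt hlt) (div_nonneg (hw e) (hN0 e))
    · have : w e = 0 := le_antisymm (not_lt.mp hwe) (hw e)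
      rw [hf]; simp [this, hwe]
  have hf0 : ∀ e, 0 ≤ f e := by
    intro e
    rw [hf]
    by_cases hwe : 0 < w e
    · simp only [if_pos hwe]
      have hNe : 0 < N e := lt_of_lt_of_le hwe (hwN e)
      exact mul_nonneg (div_nonneg (hw e) (hN0 e)) (mul_nonneg (le_of_lt hα) (hD0 e))
    · simp [hwe]
  -- expand f as a sum over pairs
  have hfsum : ∀ e, f e = ∑ e', if R e' e ∧ 0 < w e then w e / N e * (α * w e') else 0 := by
    intro e
    by_cases hwe : 0 < w e
    · rw [hf]
      simp only [if_pos hwe, hwe, and_true]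
      rw [hD, Finset.mul_sum, Finset.mul_sum, Finset.sum_filter]
      refine Finset.sum_congr rfl fun e' _ => ?_
      by_cases h : R e' e <;> simp [h, mul_comm, mul_assoc, mul_left_comm]
    · rw [hf]
      simp [hwe]
  -- the per-class-member bound
  have hg : ∀ e₀ : Ω, ∑ e ∈ univ.filter (fun e => R e₀ e ∧ 0 < w e), w e / N e
      ≤ (Fintype.card C : ℝ) := by
    intro e₀
    set S := univ.filter (fun e => R e₀ e ∧ 0 < w e) with hS
    rw [← Finset.sum_fiberwise S H (fun e => w e / N e)]
    have hc : ∀ c : C, ∑ e ∈ S.filter (fun e => H e = c), w e / N e ≤ 1 := by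
      intro c
      rcases (S.filter (fun e => H e = c)).eq_empty_or_nonempty with hemp | ⟨e₁, he₁⟩
      · simp [hemp]
      · set T := S.filter (fun e => H e = c) with hT
        set M : ℝ := ∑ e ∈ T, w e with hM
        have he₁' := he₁
        rw [hT, Finset.mem_filter, hS, Finset.mem_filter] at he₁'
        have hMpos : 0 < M := by
          have : w e₁ ≤ M := Finset.single_le_sum (fun i _ => hw i) he₁
          exact lt_of_lt_of_le he₁'.1.2.2 this
        have hMN : ∀ e ∈ T, M ≤ N e := by
          intro e he
          rw [hT, Finset.mem_filter, hS, Finset.mem_filter] at he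
          rw [hM, hN]
          refine Finset.sum_le_sum_of_subset_of_nonneg ?_ (fun i _ _ => hw i)
          intro x hx
          rw [hT, Finset.mem_filter, hS, Finset.mem_filter] at hx
          simp only [Finset.mem_filter, Finset.mem_univ, true_and]
          refine ⟨by rw [hx.2, he.2], hR.trans (hR.symm hx.1.2.1) he.1.2.1⟩
        calc ∑ e ∈ T, w e / N e ≤ ∑ e ∈ T, w e / M := by
              refine Finset.sum_le_sum fun e he => ?_
              have hTe := he
              rw [hT, Finset.mem_filter, hS, Finset.mem_filter] at hTe
              exact div_le_div_of_nonneg_left (hw e) hMpos (hMN e he)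
          _ = M / M := by rw [← Finset.sum_div]
          _ = 1 := div_self (ne_of_gt hMpos)
    calc ∑ c : C, ∑ e ∈ S.filter (fun e => H e = c), w e / N e ≤ ∑ _c : C, (1:ℝ) :=
          Finset.sum_le_sum fun c _ => hc c
      _ = Fintype.card C := by simp
  -- put it together
  calc ∑ e ∈ univ.filter (fun e : Ω => ¬ α ≤ N e / D e), w e
      ≤ ∑ e ∈ univ.filter (fun e : Ω => ¬ α ≤ N e / D e), f e := Finset.sum_le_sum hpt
    _ ≤ ∑ e, f e := Finset.sum_le_sum_of_subset_of_nonneg (Finset.filter_subset _ _)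
        (fun e _ _ => hf0 e)
    _ = ∑ e, ∑ e', if R e' e ∧ 0 < w e then w e / N e * (α * w e') else 0 :=
        Finset.sum_congr rfl fun e _ => hfsum e
    _ = ∑ e', ∑ e, if R e' e ∧ 0 < w e then w e / N e * (α * w e') else 0 :=
        Finset.sum_comm
    _ ≤ ∑ e', α * w e' * Fintype.card C := by
        refine Finset.sum_le_sum fun e' _ => ?_
        have : (∑ e, if R e' e ∧ 0 < w e then w e / N e * (α * w e') else 0)
            = α * w e' * ∑ e ∈ univ.filter (fun e => R e' e ∧ 0 < w e), w e / N e := by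
          rw [Finset.mul_sum, Finset.sum_filter]
          refine Finset.sum_congr rfl fun e _ => ?_
          by_cases h : R e' e ∧ 0 < w e <;> simp [h, mul_comm, mul_assoc, mul_left_comm]
        rw [this]
        have h1 : 0 ≤ α * w e' := mul_nonneg (le_of_lt hα) (hw e')
        exact mul_le_mul_of_nonneg_left (hg e') h1
    _ = α * Fintype.card C := by
        rw [← Finset.sum_mul, ← Finset.mul_sum, hw1, mul_one]

end Aux

/-- Combining the color-density bound and Markov's inequality:
call `e` ordinary when `d(H e ∣ e) ≥ ε^(1/3)/|C|` and `δ e ≤ ε^(2/3)/|C|`; then the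
probability that a random `e` is not ordinary is at most `2·ε^(1/3)`. -/
theorem stmt6 {Ω C : Type*} [Fintype Ω] [Fintype C] [Nonempty C]
    (w : Ω → ℝ) (hw : ∀ x, 0 ≤ w x) (hw1 : ∑ x, w x = 1)
    (H : Ω → C) (R : Ω → Ω → Prop) (hR : Equivalence R)
    (δ : Ω → ℝ) (hδ : ∀ x, 0 ≤ δ x)
    (hfib : ∀ x y, R x y → H x = H y → δ x = δ y)
    (ε : ℝ) (hε : 0 < ε)
    (hE : ∑ x, w x * δ x ≤ ε / (Fintype.card C)) :
    ∑ e ∈ Finset.univ.filter (fun e : Ω => ¬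
        (Real.rpow ε (1/3) / (Fintype.card C) ≤
            (∑ e' ∈ Finset.univ.filter (fun e' => H e' = H e ∧ R e' e), w e') /
              (∑ e' ∈ Finset.univ.filter (fun e' => R e' e), w e')
          ∧ δ e ≤ Real.rpow ε (2/3) / (Fintype.card C))),
      w e ≤ 2 * Real.rpow ε (1/3) := by
  classical
  have hCpos : (0:ℝ) < (Fintype.card C : ℝ) := by exact_mod_cast Fintype.card_pos
  have h13 : (0:ℝ) < Real.rpow ε (1/3) := Real.rpow_pos_of_pos hε _
  have h23 : (0:ℝ) < Real.rpow ε (2/3) := Real.rpow_pos_of_pos hε _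
  set N : Ω → ℝ := fun e => ∑ e' ∈ Finset.univ.filter (fun e' => H e' = H e ∧ R e' e), w e'
    with hNdef
  set D : Ω → ℝ := fun e => ∑ e' ∈ Finset.univ.filter (fun e' => R e' e), w e' with hDdef
  set α : ℝ := Real.rpow ε (1/3) / (Fintype.card C) with hαdef
  set β : ℝ := Real.rpow ε (2/3) / (Fintype.card C) with hβdef
  have hsub : Finset.univ.filter (fun e : Ω => ¬ (α ≤ N e / D e ∧ δ e ≤ β))
      ⊆ Finset.univ.filter (fun e : Ω => ¬ α ≤ N e / D e)
        ∪ Finset.univ.filter (fun e : Ω => ¬ δ e ≤ β) := by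
    intro e he
    simp only [Finset.mem_filter, Finset.mem_union, Finset.mem_univ, true_and] at *
    tauto
  have h1 : ∑ e ∈ Finset.univ.filter (fun e : Ω => ¬ α ≤ N e / D e), w e
      ≤ Real.rpow ε (1/3) := by
    have := aux_density w hw hw1 H R hR N D (fun e => rfl) (fun e => rfl) α (by positivity)
    calc ∑ e ∈ Finset.univ.filter (fun e : Ω => ¬ α ≤ N e / D e), w e
        ≤ α * Fintype.card C := this
      _ = Real.rpow ε (1/3) := by
          rw [hαdef]; field_simp
  have h2 : ∑ e ∈ Finset.univ.filter (fun e : Ω => ¬ δ e ≤ β), w e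
      ≤ Real.rpow ε (1/3) := by
    refine aux_markov w δ hw hδ β (Real.rpow ε (1/3)) (by positivity) ?_
    have hmul : β * Real.rpow ε (1/3) = ε / (Fintype.card C) := by
      have hr : Real.rpow ε (2/3) * Real.rpow ε (1/3) = ε := by
        rw [show Real.rpow ε (2/3) = ε ^ ((2:ℝ)/3) from rfl,
          show Real.rpow ε (1/3) = ε ^ ((1:ℝ)/3) from rfl, ← Real.rpow_add hε]
        norm_num
      rw [hβdef, div_mul_eq_mul_div, hr]
    rw [hmul]; exact hE
  have hsum_union : ∑ e ∈ (Finset.univ.filter (fun e : Ω => ¬ α ≤ N e / D e)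
        ∪ Finset.univ.filter (fun e : Ω => ¬ δ e ≤ β)), w e
      ≤ ∑ e ∈ Finset.univ.filter (fun e : Ω => ¬ α ≤ N e / D e), w e
        + ∑ e ∈ Finset.univ.filter (fun e : Ω => ¬ δ e ≤ β), w e := by
    have := Finset.sum_union_inter (s₁ := Finset.univ.filter (fun e : Ω => ¬ α ≤ N e / D e))
      (s₂ := Finset.univ.filter (fun e : Ω => ¬ δ e ≤ β)) (f := w)
    have hnn : 0 ≤ ∑ e ∈ (Finset.univ.filter (fun e : Ω => ¬ α ≤ N e / D e)
        ∩ Finset.univ.filter (fun e : Ω => ¬ δ e ≤ β)), w e :=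
      Finset.sum_nonneg fun i _ => hw i
    linarith
  calc ∑ e ∈ Finset.univ.filter (fun e : Ω => ¬ (α ≤ N e / D e ∧ δ e ≤ β)), w e
      ≤ ∑ e ∈ (Finset.univ.filter (fun e : Ω => ¬ α ≤ N e / D e)
          ∪ Finset.univ.filter (fun e : Ω => ¬ δ e ≤ β)), w e :=
        Finset.sum_le_sum_of_subset_of_nonneg hsub (fun i _ _ => hw i)
    _ ≤ _ + _ := hsum_union
    _ ≤ Real.rpow ε (1/3) + Real.rpow ε (1/3) := add_le_add h1 h2
    _ = 2 * Real.rpow ε (1/3) := by ring
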